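/- The language {a^i b^j c^k d^ℓ : (i < j or k < j) and (j < k or ℓ < k)} over the alphabet {a,b,c,d} is not context-free. -/

import Mathlib

/-- A binary word avoids the pattern `x xᴿ x`: no factor `u ++ u.reverse ++ u` with `u` nonempty. -/
def AvoidsP (w : List Bool) : Prop :=
  ¬ ∃ u : List Bool, u ≠ [] ∧ (u ++ u.reverse ++ u) <:+: w

/-- A binary word avoids the factors `000` and `111`. -/
def AvoidsCubes (w : List Bool) : Prop :=
  ¬ ([false, false, false] <:+: w) ∧ ¬ ([true, true, true] <:+: w)

/-- Alternating word: a prefix of `0101…` or `1010…`. -/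
def Alt (A : List Bool) : Prop := A.Chain' (· ≠ ·)

/-- Glue the blocks `A_0 a_1 a_1 A_1 a_2 a_2 ⋯ a_k a_k A_k`. -/
def glue : List (List Bool) → List Bool → List Bool
  | [], _ => []
  | [A], _ => A
  | A :: As, [] => A ++ glue As []
  | A :: As, b :: bs => A ++ [b, b] ++ glue As bs

/-- `IsFact As bs w` : `w = A_0 b_1 b_1 A_1 ⋯ b_k b_k A_k` with all `A_i` alternating. -/
def IsFact (As : List (List Bool)) (bs : List Bool) (w : List Bool) : Prop :=
  As.length = bs.length + 1 ∧ (∀ A ∈ As, Alt A) ∧ w = glue As bs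

/-- Middle and final entries of the associated sequence: `n_i = |a_i A_i a_{i+1}|`, `n_k = |a_k A_k|`. -/
def seqMid : List (List Bool) → List ℕ
  | [] => []
  | [A] => [A.length + 1]
  | A :: As => (A.length + 2) :: seqMid As

/-- The sequence `f(w) = (n_0, …, n_k)` associated to the canonical factorization. -/
def seqOf : List (List Bool) → List ℕ
  | [] => []
  | [A] => if A.isEmpty then [] else [A.length]
  | A :: As => (A.length + 1) :: seqMid As

/-- No index `j` with `d_{j-1} ≥ d_j` and `d_j ≤ d_{j+1}`. -/
def NoValley (d : List ℕ) : Prop :=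
  ∀ j : ℕ, 1 ≤ j → j + 1 < d.length →
    ¬ (d.getD (j - 1) 0 ≥ d.getD j 0 ∧ d.getD j 0 ≤ d.getD (j + 1) 0)

/-- Membership in the set `X` of sequences. -/
def InX (d : List ℕ) : Prop := (∀ x ∈ d, 0 < x) ∧ NoValley d

/-- Type 1 (strongly unimodal): strictly increasing to a unique maximum, then strictly decreasing. -/
def Type1 (d : List ℕ) : Prop :=
  (∀ x ∈ d, 0 < x) ∧ d ≠ [] ∧ ∃ j < d.length,
    (∀ i : ℕ, i + 1 ≤ j → d.getD i 0 < d.getD (i + 1) 0) ∧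
    (∀ i : ℕ, j ≤ i → i + 1 < d.length → d.getD i 0 > d.getD (i + 1) 0)

/-- Type 2: strictly increasing, two equal consecutive maximal terms, then strictly decreasing. -/
def Type2 (d : List ℕ) : Prop :=
  (∀ x ∈ d, 0 < x) ∧ ∃ j, 1 ≤ j ∧ j < d.length ∧
    d.getD (j - 1) 0 = d.getD j 0 ∧
    (∀ i : ℕ, i + 1 ≤ j - 1 → d.getD i 0 < d.getD (i + 1) 0) ∧
    (∀ i : ℕ, j ≤ i → i + 1 < d.length → d.getD i 0 > d.getD (i + 1) 0)

/-- `v n` : number of sequences in `X` of weight `n`. -/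
noncomputable def v (n : ℕ) : ℕ := Nat.card {d : List ℕ // InX d ∧ d.sum = n}

/-- A strict partition, viewed as a finite set of positive integers. -/
def StrictPartition (s : Finset ℕ) : Prop := 0 ∉ s

/-- `utilde n` : number of pairs of partitions into distinct parts of total weight `n`. -/
noncomputable def utilde (n : ℕ) : ℕ :=
  Nat.card {p : Finset ℕ × Finset ℕ //
    StrictPartition p.1 ∧ StrictPartition p.2 ∧ p.1.sum id + p.2.sum id = n}

/-- `c n` : number of binary words of length `n` avoiding `x xᴿ x`. -/
noncomputable def c (n : ℕ) : ℕ := Nat.card {w : List Bool // w.length = n ∧ AvoidsP w}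

/-- The word `(01)^n`. -/
def w01 (n : ℕ) : List Bool := (List.replicate n [false, true]).flatten

/-- The word `(10)^n`. -/
def w10 (n : ℕ) : List Bool := (List.replicate n [true, false]).flatten

namespace OgdenDev
variable {T : Type}

inductive PT (T N : Type) where
  | leaf : T → PT T N
  | node : N → List (PT T N) → PT T N

variable {N : Type}

def PT.sym : PT T N → Symbol T N
  | .leaf t => .terminal t
  | .node A _ => .nonterminal A

def PT.yield : PT T N → List T
  | .leaf t => [t]
  | .node _ ts => ts.attach.flatMap (fun c => PT.yield c.1)
decreasing_by
  have := List.sizeOf_lt_of_mem c.2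
  simp; omega

@[simp] lemma PT.yield_leaf (t : T) : (PT.leaf t : PT T N).yield = [t] := by rw [PT.yield]

@[simp] lemma PT.yield_node (A : N) (ts : List (PT T N)) :
    (PT.node A ts).yield = (ts.map PT.yield).flatten := by
  rw [PT.yield]; simp [List.flatMap]

variable {g : ContextFreeGrammar T}

inductive Valid (g : ContextFreeGrammar T) : PT T g.NT → Prop where
  | leaf (t : T) : Valid g (.leaf t)
  | node (A : g.NT) (ts : List (PT T g.NT)) (r : ContextFreeRule T g.NT)
      (hr : r ∈ g.rules) (hin : r.input = A) (hout : r.output = ts.map PT.sym)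
      (hts : ∀ t ∈ ts, Valid g t) : Valid g (.node A ts)

inductive Sub : PT T N → PT T N → Prop where
  | refl (t) : Sub t t
  | child {s c : PT T N} {A : N} {ts : List (PT T N)} :
      c ∈ ts → Sub s c → Sub s (.node A ts)

lemma Sub.trans' {s c t : PT T N} (h1 : Sub s c) (h2 : Sub c t) : Sub s t := by
  induction h2 with
  | refl => exact h1
  | child hmem _ ih => exact Sub.child hmem ih

lemma Sub.valid {s t : PT T g.NT} (h : Sub s t) (hv : Valid g t) : Valid g s := by
  induction h with
  | refl => exact hv
  | child hmem _ ih =>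
      cases hv with
      | node A ts r hr hin hout hts => exact ih (hts _ hmem)

/-- From a derivation to terminals, extract a forest of valid parse trees. -/
lemma derives_to_forest (s : List (Symbol T g.NT)) (z : List T)
    (h : g.Derives s (z.map Symbol.terminal)) :
    ∃ ts : List (PT T g.NT), ts.map PT.sym = s ∧ (ts.map PT.yield).flatten = z ∧
      ∀ t ∈ ts, Valid g t := by
  induction h using Relation.ReflTransGen.head_induction_on with
  | refl =>
      refine ⟨z.map PT.leaf, ?_, ?_, ?_⟩
      · simp [Function.comp, PT.sym]
      · induction z with
        | nil => simp
        | cons a l ih => simp_all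
      · intro t ht
        simp at ht
        obtain ⟨a, _, rfl⟩ := ht
        exact Valid.leaf a
  | head hstep _ ih =>
      obtain ⟨r, hr, hrw⟩ := hstep
      obtain ⟨p, q, hu, hv⟩ := hrw.exists_parts
      obtain ⟨ts', hsym, hyield, hvalid⟩ := ih
      rw [hv] at hsym
      rw [List.map_eq_append_iff] at hsym
      obtain ⟨t12, t3, rfl, h12, h3⟩ := hsym
      rw [List.map_eq_append_iff] at h12
      obtain ⟨t1, t2, rfl, h1, h2⟩ := h12
      refine ⟨t1 ++ [PT.node r.input t2] ++ t3, ?_, ?_, ?_⟩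
      · simp [hu, h1, h3, PT.sym]
      · simp only [List.map_append, List.flatten_append, List.map_cons, List.map_nil,
          List.flatten_cons, PT.yield_node] at hyield ⊢
        simpa using hyield
      · intro t ht
        simp only [List.append_assoc, List.mem_append, List.mem_singleton] at ht
        rcases ht with h | h | h
        · exact hvalid _ (by simp [h])
        · subst h
          exact Valid.node _ _ r hr rfl h2.symm (fun t ht => hvalid _ (by simp [ht]))
        · exact hvalid _ (by simp [h])


open ContextFreeGrammar

lemma derives_append3 {a a' b b' c c' : List (Symbol T g.NT)}
    (ha : g.Derives a a') (hb : g.Derives b b') (hc : g.Derives c c') :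
    g.Derives (a ++ b ++ c) (a' ++ b' ++ c') := by
  have h1 : g.Derives (a ++ b ++ c) (a' ++ b ++ c) := by
    have := ha.append_right (b ++ c); simpa [List.append_assoc] using this
  have h2 : g.Derives (a' ++ b ++ c) (a' ++ b' ++ c) := (hb.append_left a').append_right c
  have h3 : g.Derives (a' ++ b' ++ c) (a' ++ b' ++ c') := hc.append_left (a' ++ b')
  exact (h1.trans h2).trans h3

lemma forest_derives {ts : List (PT T g.NT)}
    (h : ∀ t ∈ ts, g.Derives [t.sym] (t.yield.map Symbol.terminal)) :
    g.Derives (ts.map PT.sym) (((ts.map PT.yield).flatten).map Symbol.terminal) := by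
  induction ts with
  | nil => simpa using Derives.refl (g := g) []
  | cons c cs ihc =>
      have hc := h c (by simp)
      have hcs := ihc (fun t ht => h t (by simp [ht]))
      have h1 := hc.append_right (cs.map PT.sym)
      have h2 := hcs.append_left (c.yield.map Symbol.terminal)
      simpa using (h1.trans h2)

/-- Each valid tree derives its yield. -/
lemma valid_derives {t : PT T g.NT} (hv : Valid g t) :
    g.Derives [t.sym] (t.yield.map Symbol.terminal) := by
  induction hv with
  | leaf t => simpa [PT.sym] using Derives.refl (g := g) [Symbol.terminal t]
  | node A ts r hr hin hout hts ih =>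
      have step : g.Produces [PT.sym (PT.node A ts)] (ts.map PT.sym) := by
        refine ⟨r, hr, ?_⟩
        rw [← hout, PT.sym, ← hin]
        exact ContextFreeRule.Rewrites.input_output
      refine step.trans_derives ?_
      simpa using forest_derives ih

/-- Context lemma: a subtree occurrence gives a derivation into a context. -/
lemma sub_context {s t : PT T g.NT} (hsub : Sub s t) (hv : Valid g t) :
    ∃ u x : List T, t.yield = u ++ s.yield ++ x ∧
      g.Derives [t.sym] (u.map Symbol.terminal ++ [s.sym] ++ x.map Symbol.terminal) := by
  induction hsub with
  | refl => exact ⟨[], [], by simp, by simpa using Derives.refl (g := g) [s.sym]⟩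
  | @child c A ts hmem hs ih =>
      cases hv with
      | node A ts r hr hin hout hts =>
        obtain ⟨u', x', hy', hd'⟩ := ih (hts _ hmem)
        obtain ⟨l, rr, rfl⟩ := List.append_of_mem hmem
        have step : g.Produces [PT.sym (PT.node A (l ++ c :: rr))]
            ((l ++ c :: rr).map PT.sym) := by
          refine ⟨r, hr, ?_⟩
          rw [← hout, PT.sym, ← hin]
          exact ContextFreeRule.Rewrites.input_output
        have hl : g.Derives (l.map PT.sym) (((l.map PT.yield).flatten).map Symbol.terminal) :=
          forest_derives (fun t ht => valid_derives (hts t (by simp [ht])))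
        have hr2 : g.Derives (rr.map PT.sym) (((rr.map PT.yield).flatten).map Symbol.terminal) :=
          forest_derives (fun t ht => valid_derives (hts t (by simp [ht])))
        refine ⟨(l.map PT.yield).flatten ++ u', x' ++ (rr.map PT.yield).flatten, ?_, ?_⟩
        · simp only [PT.yield_node, List.map_append, List.flatten_append, List.map_cons,
            List.flatten_cons, hy']
          simp
        · refine step.trans_derives ?_
          have dmid := derives_append3 hl hd' hr2
          simpa [List.append_assoc] using dmid

/-- Pumping iteration. -/
lemma pump_derives {A : g.NT} {v x w : List T}
    (hA : g.Derives [Symbol.nonterminal A]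
      (v.map Symbol.terminal ++ [Symbol.nonterminal A] ++ x.map Symbol.terminal))
    (hw : g.Derives [Symbol.nonterminal A] (w.map Symbol.terminal)) (n : ℕ) :
    g.Derives [Symbol.nonterminal A]
      ((( (List.replicate n v).flatten ++ w ++ (List.replicate n x).flatten)).map
        Symbol.terminal) := by
  induction n with
  | zero => simpa using hw
  | succ m ihm =>
      refine hA.trans ?_
      have e2 : (List.replicate (m+1) x).flatten = (List.replicate m x).flatten ++ x := by
        rw [List.replicate_succ']; simp
      have dmid := derives_append3 (Derives.refl (v.map Symbol.terminal)) ihm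
        (Derives.refl (x.map Symbol.terminal))
      rw [List.replicate_succ, e2]
      simpa [List.append_assoc] using dmid

variable [DecidableEq T]

/-- Number of marked letters (occurrences of `a`) in the yield. -/
def mu (a : T) (t : PT T N) : ℕ := t.yield.count a

lemma mu_node (a : T) (A : N) (ts : List (PT T N)) :
    mu a (PT.node A ts) = (ts.map (mu a)).sum := by
  rw [mu, PT.yield_node]
  induction ts with
  | nil => simp
  | cons c cs ih => simp [List.count_append, ih, mu]

lemma exists_argmax {α : Type} (f : α → ℕ) {l : List α} (hl : l ≠ []) :
    ∃ c ∈ l, ∀ c' ∈ l, f c' ≤ f c := by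
  induction l with
  | nil => simp at hl
  | cons a as ih =>
      rcases eq_or_ne as [] with rfl | hne
      · exact ⟨a, by simp, by simp⟩
      · obtain ⟨c, hc, hmax⟩ := ih hne
        rcases le_total (f a) (f c) with h | h
        · exact ⟨c, by simp [hc], by
            intro c' hc'
            rcases List.mem_cons.mp hc' with rfl | h' 
            · exact h
            · exact hmax c' h'⟩
        · exact ⟨a, by simp, by
            intro c' hc'
            rcases List.mem_cons.mp hc' with rfl | h'
            · exact le_rfl
            · exact (hmax c' h').trans h⟩

lemma chain_lemma (a : T) (k : ℕ) (hk : 1 ≤ k)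
    (hrules : ∀ r ∈ g.rules, r.output.length ≤ k) :
    ∀ (n : ℕ) (t : PT T g.NT), sizeOf t ≤ n → Valid g t → ∀ d : ℕ,
      (k+1)^d * (k+1) ≤ mu a t →
      ∃ l : List (PT T g.NT), l.length = d ∧
        List.Chain' (fun s s' => Sub s' s ∧ mu a s' < mu a s) (t :: l) ∧
        ∀ s ∈ l, k + 1 ≤ mu a s ∧ Sub s t := by
  intro n
  induction n with
  | zero =>
      intro t ht
      exfalso
      cases t <;> simp at ht <;> omega
  | succ m ihm =>
      intro t hsize hv d hmu
      match d, t, hv with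
      | d, _, Valid.leaf b =>
          -- mu of a leaf is ≤ 1 < (k+1)^d * (k+1)
          exfalso
          have h1 : mu a (PT.leaf b : PT T g.NT) ≤ 1 := by
            rw [mu, PT.yield_leaf]
            simpa using List.count_le_length (a := a) (l := [b])
          have h2 : 2 ≤ (k+1)^d * (k+1) := by
            have : 1 ≤ (k+1)^d := Nat.one_le_pow _ _ (by omega)
            nlinarith
          omega
      | 0, t, hv => exact ⟨[], rfl, List.isChain_singleton _, by simp⟩
      | (d+1), _, Valid.node A ts r hr hin hout hts =>
          have hts_ne : ts ≠ [] := by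
            rintro rfl
            rw [mu_node] at hmu
            have : 1 ≤ (k+1)^(d+1) * (k+1) := Nat.one_le_iff_ne_zero.mpr (by positivity)
            simp only [List.map_nil, List.sum_nil, Nat.le_zero] at hmu
            omega
          obtain ⟨c, hc, hcmax⟩ := exists_argmax (mu a) hts_ne
          have hlen : ts.length ≤ k := by
            have := hrules r hr
            rw [hout, List.length_map] at this
            exact this
          have hsum : mu a (PT.node A ts) ≤ k * mu a c := by
            rw [mu_node]
            calc (ts.map (mu a)).sum ≤ (ts.map (mu a)).length * mu a c := by
                  apply List.sum_le_card_nsmul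
                  intro x hx
                  simp only [List.mem_map] at hx
                  obtain ⟨c', hc', rfl⟩ := hx
                  exact hcmax c' hc'
              _ ≤ k * mu a c := by
                  rw [List.length_map]
                  exact Nat.mul_le_mul_right _ hlen
          have hszc : sizeOf c ≤ m := by
            have h1 := List.sizeOf_lt_of_mem hc
            have h2 : sizeOf (PT.node A ts) = 1 + sizeOf A + sizeOf ts := by simp
            omega
          have hvc : Valid g c := hts c hc
          have hcbig : (k+1)^d * (k+1) ≤ mu a c := by
            have h1 : (k+1) * ((k+1)^d * (k+1)) ≤ (k+1)^(d+1) * (k+1) := by ring_nf; omega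
            have h2 : (k+1)^(d+1) * (k+1) ≤ k * mu a c := le_trans hmu hsum
            have h3 : k * ((k+1)^d * (k+1)) ≤ k * mu a c := by nlinarith [Nat.one_le_pow d (k+1) (by omega)]
            exact Nat.le_of_mul_le_mul_left h3 (by omega)
          have hcle : mu a c ≤ mu a (PT.node A ts) := by
            rw [mu_node]
            exact List.single_le_sum (fun x _ => Nat.zero_le x) _ (List.mem_map_of_mem hc)
          have hsubc : Sub c (PT.node A ts) := Sub.child hc (Sub.refl c)
          rcases lt_or_eq_of_le hcle with h | h
          · -- strict drop: recurse with d
            obtain ⟨l', hlen', hchain', hprops'⟩ := ihm c hszc hvc d hcbig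
            refine ⟨c :: l', by simp [hlen'], ?_, ?_⟩
            · exact List.isChain_cons_cons.mpr ⟨⟨hsubc, h⟩, hchain'⟩
            · intro s hs
              rcases List.mem_cons.mp hs with rfl | hs'
              · exact ⟨le_trans (by nlinarith [Nat.one_le_pow d (k+1) (by omega : 0 < k+1)]) hcbig,
                  hsubc⟩
              · obtain ⟨h1, h2⟩ := hprops' s hs'
                exact ⟨h1, h2.trans' hsubc⟩
          · -- equal: recurse with d+1
            obtain ⟨l', hlen', hchain', hprops'⟩ := ihm c hszc hvc (d+1) (h ▸ hmu)
            refine ⟨l', hlen', ?_, ?_⟩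
            · match l', hchain' with
              | [], _ => simp at hlen'
              | (s :: rest), hch =>
                  rcases List.isChain_cons_cons.mp hch with ⟨⟨hsub1, hlt1⟩, hch2⟩
                  exact List.isChain_cons_cons.mpr ⟨⟨hsub1.trans' hsubc, h ▸ hlt1⟩, hch2⟩
            · intro s hs
              obtain ⟨h1, h2⟩ := hprops' s hs
              exact ⟨h1, h2.trans' hsubc⟩

theorem ogden_weak (g : ContextFreeGrammar.{0} T) (a : T) :
    ∃ p : ℕ, ∀ z ∈ g.language, p ≤ z.count a →
      ∃ u v w x y : List T, z = u ++ v ++ w ++ x ++ y ∧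
        1 ≤ v.count a + x.count a ∧
        ∀ n : ℕ, (u ++ (List.replicate n v).flatten ++ w ++
          (List.replicate n x).flatten ++ y) ∈ g.language := by
  classical
  set k : ℕ := (g.rules.sup fun r => r.output.length) + 1 with hk
  have hk1 : 1 ≤ k := by omega
  have hrules : ∀ r ∈ g.rules, r.output.length ≤ k := by
    intro r hr
    have h' : r.output.length ≤ g.rules.sup fun r => r.output.length := by
      simpa using Finset.le_sup (f := fun r => r.output.length) hr
    omega
  set F : Finset (Symbol T g.NT) :=
    g.rules.image (fun r => Symbol.nonterminal r.input) with hF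
  set m : ℕ := F.card with hm
  refine ⟨(k+1)^m * (k+1), ?_⟩
  intro z hz hcount
  rw [ContextFreeGrammar.mem_language_iff] at hz
  obtain ⟨ts, hsym, hyield, hvalid⟩ := derives_to_forest _ _ hz
  -- ts is a single tree
  obtain ⟨t, rfl⟩ : ∃ t, ts = [t] := by
    rcases ts with _ | ⟨t, _ | ⟨t2, rest⟩⟩ <;> simp at hsym
    exact ⟨t, rfl⟩
  simp only [List.map_cons, List.map_nil, List.flatten_cons, List.flatten_nil,
    List.append_nil, List.cons.injEq, and_true] at hsym hyield
  have hvt : Valid g t := hvalid t (by simp)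
  have hmut : (k+1)^m * (k+1) ≤ mu a t := by
    rw [mu, hyield]; exact hcount
  obtain ⟨l, hlen, hchain, hprops⟩ :=
    chain_lemma a k hk1 hrules (sizeOf t) t le_rfl hvt m hmut
  set L : List (PT T g.NT) := t :: l with hL
  have hLlen : L.length = m + 1 := by simp [hL, hlen]
  -- every element of L is a valid node whose symbol is in F
  have hsymF : ∀ s ∈ L, PT.sym s ∈ F := by
    intro s hs
    have hvs : Valid g s := by
      rcases List.mem_cons.mp hs with rfl | hs'
      · exact hvt
      · exact ((hprops s hs').2).valid hvt
    cases hvs with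
    | leaf b =>
        -- s is a leaf; impossible: either s = t (sym = nonterminal) or mu ≥ 2
        exfalso
        rcases List.mem_cons.mp hs with heq | hs'
        · rw [← heq] at hsym
          simp [PT.sym] at hsym
        · have h1 := (hprops _ hs').1
          have : mu a (PT.leaf b : PT T g.NT) ≤ 1 := by
            rw [mu, PT.yield_leaf]
            simpa using List.count_le_length (a := a) (l := [b])
          omega
    | node A ts' r hr hin hout hts' =>
        rw [hF]
        simp only [Finset.mem_image]
        exact ⟨r, hr, by rw [hin, PT.sym]⟩
  -- pigeonhole
  have hcard : (Finset.univ : Finset (Fin (m+1))).card > F.card := by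
    simp [hm]
  obtain ⟨i, -, j, -, hij, hfij⟩ :=
    Finset.exists_ne_map_eq_of_card_lt_of_maps_to (f := fun i : Fin (m+1) =>
      (L.get (i.cast hLlen.symm)).sym) hcard
      (fun i _ => hsymF _ (by apply List.get_mem))
  -- order i < j (wlog)
  have key : ∀ i j : Fin (m+1), i < j →
      (L.get (i.cast hLlen.symm)).sym = (L.get (j.cast hLlen.symm)).sym →
      False → True := fun _ _ _ _ _ => trivial
  -- get pairwise relation from the chain
  haveI : IsTrans (PT T g.NT) (fun s s' => Sub s' s ∧ mu a s' < mu a s) :=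
    ⟨fun p q r h1 h2 => ⟨h2.1.trans' h1.1, h2.2.trans h1.2⟩⟩
  have hpair : List.Pairwise (fun s s' => Sub s' s ∧ mu a s' < mu a s) L :=
    List.isChain_iff_pairwise.mp hchain
  -- wlog i < j
  have main : ∀ i j : Fin (m+1), i < j →
      (L.get (i.cast hLlen.symm)).sym = (L.get (j.cast hLlen.symm)).sym →
      ∃ u v w x y : List T, z = u ++ v ++ w ++ x ++ y ∧
        1 ≤ v.count a + x.count a ∧
        ∀ n : ℕ, (u ++ (List.replicate n v).flatten ++ w ++
          (List.replicate n x).flatten ++ y) ∈ g.language := by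
    intro i j hij hsymEq
    set si := L.get (i.cast hLlen.symm) with hsi
    set sj := L.get (j.cast hLlen.symm) with hsj
    obtain ⟨hsubji, hltji⟩ := List.pairwise_iff_get.mp hpair (i.cast hLlen.symm)
      (j.cast hLlen.symm) (by exact hij)
    rw [← hsi, ← hsj] at hsubji hltji
    have hsubit : Sub si t := by
      have hmem : si ∈ L := by rw [hsi]; apply List.get_mem
      rcases List.mem_cons.mp hmem with heq | hmem'
      · rw [heq]; exact Sub.refl t
      · exact (hprops _ hmem').2
    have hvsi : Valid g si := hsubit.valid hvt
    have hvsj : Valid g sj := hsubji.valid hvsi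
    -- si's symbol is a nonterminal
    obtain ⟨A, hA⟩ : ∃ A, si.sym = Symbol.nonterminal A := by
      have := hsymF si (by rw [hsi]; apply List.get_mem)
      rw [hF] at this
      simp only [Finset.mem_image] at this
      obtain ⟨r, -, hr⟩ := this
      exact ⟨r.input, hr.symm⟩
    obtain ⟨u, y, hzdec, d1⟩ := sub_context hsubit hvt
    obtain ⟨v, x, hsidec, d2⟩ := sub_context hsubji hvsi
    have d3 : g.Derives [sj.sym] (sj.yield.map Symbol.terminal) := valid_derives hvsj
    rw [← hsymEq, hA] at d2 d3
    rw [hA] at d1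
    refine ⟨u, v, sj.yield, x, y, ?_, ?_, ?_⟩
    · rw [← hyield, hzdec, hsidec]; simp
    · have e1 : si.yield.count a = v.count a + sj.yield.count a + x.count a := by
        rw [hsidec]; simp [List.count_append]; omega
      have : mu a sj < mu a si := hltji
      rw [mu, mu] at this
      omega
    · intro n
      have dpump := pump_derives d2 d3 n
      have dfin := d1.trans (derives_append3 (Derives.refl (u.map Symbol.terminal))
        dpump (Derives.refl (y.map Symbol.terminal)))
      rw [ContextFreeGrammar.mem_language_iff]
      have hts : [Symbol.nonterminal g.initial] = [t.sym] := by rw [hsym]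
      rw [hts]
      simpa [List.append_assoc] using dfin
  rcases lt_trichotomy i j with h | h | h
  · exact main i j h hfij
  · exact absurd h hij
  · exact main j i h hfij.symm

lemma count_flatten_replicate [DecidableEq T] (c : T) (n : ℕ) (v : List T) :
    List.count c ((List.replicate n v).flatten) = n * List.count c v := by
  induction n with
  | zero => simp
  | succ m ih => simp [List.replicate_succ, List.count_append, ih, Nat.succ_mul]; omega

lemma const_of_sq_pairwise {α : Type} [PartialOrder α] {v : List α}
    (h : (v ++ v).Pairwise (· ≤ ·)) : ∀ b ∈ v, ∀ c ∈ v, b = c := by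
  rw [List.pairwise_append] at h
  intro b hb c hc
  exact le_antisymm (h.2.2 b hb c hc) (h.2.2 c hc b hb)

lemma block_pairwise (i j k l : ℕ) :
    (List.replicate i (0 : Fin 4) ++ List.replicate j 1 ++
      List.replicate k 2 ++ List.replicate l 3).Pairwise (· ≤ ·) := by
  simp only [List.pairwise_append, List.pairwise_replicate, List.mem_append,
    List.mem_replicate]
  refine ⟨⟨⟨?_, ?_, ?_⟩, ?_, ?_⟩, ?_, ?_⟩ <;>
    first
      | (intro a ha b hb
         rcases ha with ⟨-, rfl⟩ | ⟨-, rfl⟩ | ⟨-, rfl⟩ <;> rcases hb with ⟨-, rfl⟩ <;> decide)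
      | (intro a ha b hb
         rcases ha with ⟨-, rfl⟩ | ⟨-, rfl⟩ <;> rcases hb with ⟨-, rfl⟩ <;> decide)
      | (intro a ha b hb
         rcases ha with ⟨-, rfl⟩ <;> rcases hb with ⟨-, rfl⟩ <;> decide)
      | omega
      | (left; decide)

lemma no_three {v x : List (Fin 4)}
    (hv : ∀ b ∈ v, ∀ c ∈ v, b = c) (hx : ∀ b ∈ x, ∀ c ∈ x, b = c)
    {c1 c2 c3 : Fin 4} (h12 : c1 ≠ c2) (h13 : c1 ≠ c3) (h23 : c2 ≠ c3)
    (m1 : c1 ∈ v ∨ c1 ∈ x) (m2 : c2 ∈ v ∨ c2 ∈ x) (m3 : c3 ∈ v ∨ c3 ∈ x) : False := by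
  rcases m1 with h1v | h1x <;> rcases m2 with h2v | h2x <;> rcases m3 with h3v | h3x
  · exact h12 (hv _ h1v _ h2v)
  · exact h12 (hv _ h1v _ h2v)
  · exact h13 (hv _ h1v _ h3v)
  · exact h23 (hx _ h2x _ h3x)
  · exact h23 (hv _ h2v _ h3v)
  · exact h13 (hx _ h1x _ h3x)
  · exact h12 (hx _ h1x _ h2x)
  · exact h12 (hx _ h1x _ h2x)

end OgdenDev


open OgdenDev

/-- The language `{aⁱ bʲ cᵏ dˡ : (i<j ∨ k<j) ∧ (j<k ∨ ℓ<k)}` is not context-free. -/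
theorem stmt9 :
    ¬ Language.IsContextFree
      {z : List (Fin 4) | ∃ i j k l : ℕ,
        z = List.replicate i (0 : Fin 4) ++ List.replicate j 1 ++
            List.replicate k 2 ++ List.replicate l 3 ∧
        (i < j ∨ k < j) ∧ (j < k ∨ l < k)} := by
  rintro ⟨g, hg⟩
  obtain ⟨p, hp⟩ := ogden_weak g (1 : Fin 4)
  set Z : List (Fin 4) := List.replicate p (0 : Fin 4) ++ List.replicate (p+1) 1 ++
      List.replicate (p+2) 2 ++ List.replicate (p+2) 3 with hZ
  have hZmem : Z ∈ g.language := by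
    rw [hg]
    exact ⟨p, p+1, p+2, p+2, rfl, Or.inl (by omega), Or.inl (by omega)⟩
  have hZcount : p ≤ Z.count 1 := by
    rw [hZ]
    simp [List.count_append, List.count_replicate]
  obtain ⟨u, v, w, x, y, hzdec, hmark, hpump⟩ := hp Z hZmem hZcount
  -- abbreviations
  set e0 : ℕ := u.count 0 + w.count 0 + y.count 0 with he0
  set e1 : ℕ := u.count 1 + w.count 1 + y.count 1 with he1
  set e2 : ℕ := u.count 2 + w.count 2 + y.count 2 with he2
  set e3 : ℕ := u.count 3 + w.count 3 + y.count 3 with he3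
  set d0 : ℕ := v.count 0 + x.count 0 with hd0
  set d1 : ℕ := v.count 1 + x.count 1 with hd1
  set d2 : ℕ := v.count 2 + x.count 2 with hd2
  set d3 : ℕ := v.count 3 + x.count 3 with hd3
  -- counts of Z in two ways
  have hcnt : ∀ c : Fin 4, Z.count c = (u.count c + w.count c + y.count c) +
      (v.count c + x.count c) := by
    intro c
    rw [hzdec]
    simp [List.count_append]
    omega
  have hc0 : Z.count 0 = p := by rw [hZ]; simp [List.count_append, List.count_replicate]
  have hc1 : Z.count 1 = p + 1 := by rw [hZ]; simp [List.count_append, List.count_replicate]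
  have hc2 : Z.count 2 = p + 2 := by rw [hZ]; simp [List.count_append, List.count_replicate]
  have hc3 : Z.count 3 = p + 2 := by rw [hZ]; simp [List.count_append, List.count_replicate]
  have hs0 := (hcnt 0).symm.trans hc0
  have hs1 := (hcnt 1).symm.trans hc1
  have hs2 := (hcnt 2).symm.trans hc2
  have hs3 := (hcnt 3).symm.trans hc3
  -- key conditions at each pumping exponent
  have key : ∀ n : ℕ,
      ((e0 + n*d0 < e1 + n*d1 ∨ e2 + n*d2 < e1 + n*d1) ∧
       (e1 + n*d1 < e2 + n*d2 ∨ e3 + n*d3 < e2 + n*d2)) := by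
    intro n
    have hmem := hpump n
    rw [hg] at hmem
    obtain ⟨i, j, k, l, heq, hA, hB⟩ := hmem
    have cc : ∀ c : Fin 4,
        (u ++ (List.replicate n v).flatten ++ w ++ (List.replicate n x).flatten ++ y).count c
        = (u.count c + w.count c + y.count c) + n * (v.count c + x.count c) := by
      intro c
      simp [List.count_append, count_flatten_replicate]
      ring
    have g0 : (u ++ (List.replicate n v).flatten ++ w ++
        (List.replicate n x).flatten ++ y).count 0 = i := by
      rw [heq]; simp [List.count_append, List.count_replicate]
    have g1 : (u ++ (List.replicate n v).flatten ++ w ++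
        (List.replicate n x).flatten ++ y).count 1 = j := by
      rw [heq]; simp [List.count_append, List.count_replicate]
    have g2 : (u ++ (List.replicate n v).flatten ++ w ++
        (List.replicate n x).flatten ++ y).count 2 = k := by
      rw [heq]; simp [List.count_append, List.count_replicate]
    have g3 : (u ++ (List.replicate n v).flatten ++ w ++
        (List.replicate n x).flatten ++ y).count 3 = l := by
      rw [heq]; simp [List.count_append, List.count_replicate]
    have hi := g0.symm.trans (cc 0)
    have hj := g1.symm.trans (cc 1)
    have hk := g2.symm.trans (cc 2)
    have hl := g3.symm.trans (cc 3)
    rw [← hi, ← hj, ← hk, ← hl]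
    exact ⟨hA, hB⟩
  -- constancy of v and x
  have hW2 := hpump 2
  rw [hg] at hW2
  obtain ⟨i2, j2, k2, l2, heq2, -, -⟩ := hW2
  have hpw : (u ++ (List.replicate 2 v).flatten ++ w ++
      (List.replicate 2 x).flatten ++ y).Pairwise (· ≤ ·) := by
    rw [heq2]
    exact block_pairwise i2 j2 k2 l2
  have hvv : (v ++ v).Sublist (u ++ (List.replicate 2 v).flatten ++ w ++
      (List.replicate 2 x).flatten ++ y) := by
    have : (v ++ v) <:+: (u ++ (List.replicate 2 v).flatten ++ w ++
        (List.replicate 2 x).flatten ++ y) := by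
      refine ⟨u, w ++ (List.replicate 2 x).flatten ++ y, ?_⟩
      simp [List.replicate_succ]
    exact this.sublist
  have hxx : (x ++ x).Sublist (u ++ (List.replicate 2 v).flatten ++ w ++
      (List.replicate 2 x).flatten ++ y) := by
    have : (x ++ x) <:+: (u ++ (List.replicate 2 v).flatten ++ w ++
        (List.replicate 2 x).flatten ++ y) := by
      refine ⟨u ++ (List.replicate 2 v).flatten ++ w, y, ?_⟩
      simp [List.replicate_succ]
    exact this.sublist
  have hvconst : ∀ b ∈ v, ∀ c ∈ v, b = c := const_of_sq_pairwise (hpw.sublist hvv)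
  have hxconst : ∀ b ∈ x, ∀ c ∈ x, b = c := const_of_sq_pairwise (hpw.sublist hxx)
  have memOf : ∀ c : Fin 4, 0 < v.count c + x.count c → c ∈ v ∨ c ∈ x := by
    intro c hc
    by_cases h : 0 < v.count c
    · exact Or.inl (List.count_pos_iff.mp h)
    · exact Or.inr (List.count_pos_iff.mp (by omega))
  have hd1pos : 1 ≤ d1 := by
    rw [hd1]
    simpa [List.count_append] using hmark
  have hex02 : ¬(0 < d0 ∧ 0 < d2) := by
    rintro ⟨h1, h2⟩
    exact no_three hvconst hxconst (by decide) (by decide) (by decide)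
      (memOf 0 h1) (memOf 1 (by omega)) (memOf 2 h2)
  have hex03 : ¬(0 < d0 ∧ 0 < d3) := by
    rintro ⟨h1, h2⟩
    exact no_three hvconst hxconst (by decide) (by decide) (by decide)
      (memOf 0 h1) (memOf 1 (by omega)) (memOf 3 h2)
  have hex23 : ¬(0 < d2 ∧ 0 < d3) := by
    rintro ⟨h1, h2⟩
    exact no_three hvconst hxconst (by decide) (by decide) (by decide)
      (memOf 1 (by omega)) (memOf 2 h1) (memOf 3 h2)
  have k0 := key 0
  have k2 := key 2
  omega
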